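/- Let C be an m×m Hermitian positive definite matrix with eigenvalues λ_{m−1} ≤ ... ≤ λ_0, and assume n ≤ m/2. For any real numbers μ_0, ..., μ_{n−1} satisfying λ_{i+m−n} ≤ μ_i ≤ λ_i for 0 ≤ i ≤ n−1, there exists a matrix Q ∈ ℂ^{m×n} with Q^H Q = I_n such that the eigenvalues of Q^H C Q are exactly μ_0, ..., μ_{n−1}. -/

import Mathlib

open Matrix ComplexOrder Polynomial

lemma charpoly_diagonal' {R : Type*} [CommRing R] {n : Type*} [DecidableEq n] [Fintype n]
    (d : n → R) : (Matrix.diagonal d).charpoly = ∏ i, (X - Polynomial.C (d i)) := by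
  have h : charmatrix (Matrix.diagonal d) = Matrix.diagonal (fun i => (X : R[X]) - Polynomial.C (d i)) := by
    ext i j
    by_cases hij : i = j
    · subst hij; simp [charmatrix_apply_eq]
    · simp [charmatrix_apply_ne _ _ _ hij, Matrix.diagonal_apply_ne _ hij]
  rw [Matrix.charpoly, h, Matrix.det_diagonal]

theorem exists_stiefel_with_prescribed_eigenvalues {m n : ℕ} (hnm : 2 * n ≤ m)
    (C : Matrix (Fin m) (Fin m) ℂ) (hC : C.PosDef)
    (lam : Fin m → ℝ)
    (hlam : ∃ σ : Equiv.Perm (Fin m), lam = hC.isHermitian.eigenvalues ∘ σ)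
    (hlam_dec : ∀ i j : Fin m, i ≤ j → lam j ≤ lam i)
    (mu : Fin n → ℝ)
    (hmu : ∀ (i : ℕ) (hi : i < n),
      lam ⟨i + m - n, by omega⟩ ≤ mu ⟨i, hi⟩ ∧ mu ⟨i, hi⟩ ≤ lam ⟨i, by omega⟩) :
    ∃ Q : Matrix (Fin m) (Fin n) ℂ, Qᴴ * Q = 1 ∧
      (Qᴴ * C * Q).charpoly = ∏ i : Fin n, (X - Polynomial.C (mu i : ℂ)) := by
  obtain ⟨σ, hσ⟩ := hlam
  have hH := hC.isHermitian
  set U : Matrix (Fin m) (Fin m) ℂ := (hH.eigenvectorUnitary : Matrix (Fin m) (Fin m) ℂ) with hU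
  have hin : ∀ i : Fin n, (i : ℕ) < m := fun i => by have := i.2; omega
  have hin' : ∀ i : Fin n, (i : ℕ) + m - n < m := fun i => by have := i.2; omega
  set a : Fin n → Fin m := fun i => σ ⟨i.1, hin i⟩ with ha_def
  set b : Fin n → Fin m := fun i => σ ⟨i.1 + m - n, hin' i⟩ with hb_def
  set t : Fin n → ℝ := fun i =>
    if lam ⟨i.1 + m - n, hin' i⟩ = lam ⟨i.1, hin i⟩ then 1
    else (mu i - lam ⟨i.1 + m - n, hin' i⟩) / (lam ⟨i.1, hin i⟩ - lam ⟨i.1 + m - n, hin' i⟩)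
    with ht_def
  have hmu' : ∀ i : Fin n, lam ⟨i.1 + m - n, hin' i⟩ ≤ mu i ∧ mu i ≤ lam ⟨i.1, hin i⟩ := by
    intro i
    have := hmu i.1 i.2
    simpa using this
  have ht01 : ∀ i : Fin n, 0 ≤ t i ∧ t i ≤ 1 := by
    intro i
    obtain ⟨h1, h2⟩ := hmu' i
    simp only [ht_def]
    split_ifs with h
    · exact ⟨zero_le_one, le_refl 1⟩
    · have hlt : lam ⟨i.1 + m - n, hin' i⟩ < lam ⟨i.1, hin i⟩ :=
        lt_of_le_of_ne (le_trans h1 h2) h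
      constructor
      · apply div_nonneg <;> linarith
      · rw [div_le_one (by linarith)]; linarith
  have htmu : ∀ i : Fin n,
      t i * lam ⟨i.1, hin i⟩ + (1 - t i) * lam ⟨i.1 + m - n, hin' i⟩ = mu i := by
    intro i
    obtain ⟨h1, h2⟩ := hmu' i
    simp only [ht_def]
    split_ifs with h
    · rw [h] at h1 ⊢; ring_nf; linarith
    · have hlt : lam ⟨i.1 + m - n, hin' i⟩ < lam ⟨i.1, hin i⟩ :=
        lt_of_le_of_ne (le_trans h1 h2) h
      have hne : lam ⟨i.1, hin i⟩ - lam ⟨i.1 + m - n, hin' i⟩ ≠ 0 := by linarith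
      have hcanc : (mu i - lam ⟨i.1 + m - n, hin' i⟩) /
          (lam ⟨i.1, hin i⟩ - lam ⟨i.1 + m - n, hin' i⟩) *
          (lam ⟨i.1, hin i⟩ - lam ⟨i.1 + m - n, hin' i⟩) = mu i - lam ⟨i.1 + m - n, hin' i⟩ :=
        div_mul_cancel₀ _ hne
      nlinarith [hcanc]
  have hab : ∀ i j : Fin n, a i ≠ b j := by
    intro i j h
    have h2 := σ.injective h
    rw [Fin.mk.injEq] at h2
    have := i.2; have := j.2; omega
  have ha_inj : ∀ i j : Fin n, a i = a j → i = j := by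
    intro i j h
    have h2 := σ.injective h
    rw [Fin.mk.injEq] at h2
    exact Fin.ext h2
  have hb_inj : ∀ i j : Fin n, b i = b j → i = j := by
    intro i j h
    have h2 := σ.injective h
    rw [Fin.mk.injEq] at h2
    have := i.2; have := j.2
    exact Fin.ext (by omega)
  set S : Matrix (Fin m) (Fin n) ℂ := Matrix.of fun p i =>
    if p = a i then ((Real.sqrt (t i) : ℝ) : ℂ)
    else if p = b i then ((Real.sqrt (1 - t i) : ℝ) : ℂ) else 0 with hS_def
  have hkey : ∀ d : Fin m → ℂ, Sᴴ * (Matrix.diagonal d * S) =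
      Matrix.diagonal (fun i : Fin n => (t i : ℂ) * d (a i) + (1 - (t i : ℂ)) * d (b i)) := by
    intro d
    ext i j
    rw [Matrix.mul_apply]
    have hsummand : ∀ p : Fin m, Sᴴ i p * (Matrix.diagonal d * S) p j =
        (if p = a i then ((Real.sqrt (t i) : ℂ)) * (d p * S p j) else 0) +
        (if p = b i then ((Real.sqrt (1 - t i) : ℂ)) * (d p * S p j) else 0) := by
      intro p
      rw [Matrix.conjTranspose_apply, Matrix.diagonal_mul]
      by_cases h1 : p = a i
      · subst h1
        simp [hS_def, hab i i, Complex.conj_ofReal]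
      · by_cases h2 : p = b i
        · subst h2
          simp [hS_def, Ne.symm (hab i i), Complex.conj_ofReal]
        · simp [hS_def, h1, h2]
    rw [Finset.sum_congr rfl (fun p _ => hsummand p), Finset.sum_add_distrib,
      Finset.sum_ite_eq' Finset.univ (a i), Finset.sum_ite_eq' Finset.univ (b i)]
    simp only [Finset.mem_univ, if_true]
    by_cases hij : i = j
    · subst hij
      have hSa : S (a i) i = ((Real.sqrt (t i) : ℝ) : ℂ) := by simp [hS_def]
      have hSb : S (b i) i = ((Real.sqrt (1 - t i) : ℝ) : ℂ) := by
        simp [hS_def, Ne.symm (hab i i)]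
      rw [hSa, hSb, Matrix.diagonal_apply_eq]
      obtain ⟨h0, h1⟩ := ht01 i
      have e1 : ((Real.sqrt (t i) : ℝ) : ℂ) * (d (a i) * ((Real.sqrt (t i) : ℝ) : ℂ)) =
          (t i : ℂ) * d (a i) := by
        rw [mul_comm (d (a i)) _, ← mul_assoc, ← Complex.ofReal_mul, Real.mul_self_sqrt h0]
      have e2 : ((Real.sqrt (1 - t i) : ℝ) : ℂ) * (d (b i) * ((Real.sqrt (1 - t i) : ℝ) : ℂ)) =
          ((1 - t i : ℝ) : ℂ) * d (b i) := by
        rw [mul_comm (d (b i)) _, ← mul_assoc, ← Complex.ofReal_mul,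
          Real.mul_self_sqrt (by linarith)]
      rw [e1, e2]
      push_cast
      ring
    · have hSa : S (a i) j = 0 := by
        have h1 : a i ≠ a j := fun h => hij (ha_inj i j h)
        have h2 : a i ≠ b j := hab i j
        simp [hS_def, h1, h2]
      have hSb : S (b i) j = 0 := by
        have h1 : b i ≠ a j := Ne.symm (hab j i)
        have h2 : b i ≠ b j := fun h => hij (hb_inj i j h)
        simp [hS_def, h1, h2]
      rw [hSa, hSb, Matrix.diagonal_apply_ne _ hij]
      ring
  have hUU : Uᴴ * U = 1 := by
    rw [← Matrix.star_eq_conjTranspose]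
    exact Unitary.coe_star_mul_self hH.eigenvectorUnitary
  have hdiag : Uᴴ * C * U = Matrix.diagonal (RCLike.ofReal ∘ hH.eigenvalues) := by
    rw [← Matrix.star_eq_conjTranspose]
    have h := hH.conjStarAlgAut_star_eigenvectorUnitary
    rw [Unitary.conjStarAlgAut_star_apply] at h
    simpa [hU] using h
  refine ⟨U * S, ?_, ?_⟩
  · simp only [conjTranspose_mul, Matrix.mul_assoc]
    rw [← Matrix.mul_assoc Uᴴ U S, hUU, Matrix.one_mul]
    have h1 := hkey (fun _ => 1)
    rw [show Matrix.diagonal (fun _ : Fin m => (1:ℂ)) = 1 from Matrix.diagonal_one,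
      Matrix.one_mul] at h1
    rw [h1, ← Matrix.diagonal_one]
    congr 1
    funext i
    ring
  · simp only [conjTranspose_mul, Matrix.mul_assoc]
    rw [← Matrix.mul_assoc C U S, ← Matrix.mul_assoc Uᴴ (C * U) S,
      ← Matrix.mul_assoc Uᴴ C U, hdiag, hkey, charpoly_diagonal']
    apply Finset.prod_congr rfl
    intro i _
    congr 1
    have hea : hH.eigenvalues (a i) = lam ⟨i.1, hin i⟩ := by
      rw [hσ]; rfl
    have heb : hH.eigenvalues (b i) = lam ⟨i.1 + m - n, hin' i⟩ := by
      rw [hσ]; rfl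
    have := htmu i
    have hofreal : (RCLike.ofReal : ℝ → ℂ) = Complex.ofReal := rfl
    simp only [Function.comp_apply, hea, heb, hofreal]
    rw [← this]
    push_cast
    ring
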